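/- arXiv:math/0207073 — 5 statements merged into one kernel-verified Lean document; each statement's English description precedes it below -/
import Mathlib

section
/- Let k be a field of characteristic zero and λ ∈ k* of multiplicative order n. The center of the algebra A generated by x, y, z with relations xy - yx = 1, xz = λzx, yz = λ⁻¹zy is exactly the polynomial subalgebra k[z^n] generated by z^n. -/
section aux
variable {k : Type*} [Field k] [CharZero k] {A : Type*} [Ring A] [Algebra k A]

lemma aux_pow_yx (x y : A) (h : x * y - y * x = 1) (b : ℕ) :
    y ^ b * x = x * y ^ b - (b : k) • y ^ (b - 1) := by
  induction b with
  | zero => simp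
  | succ b ih =>
    have hyx : y * x = x * y - 1 := by rw [← h]; abel
    have h1 : (b : k) • (y ^ (b-1) * y) = (b : k) • y ^ b := by
      cases b with
      | zero => simp
      | succ b' => rw [Nat.succ_sub_one, ← pow_succ]
    rw [pow_succ, mul_assoc, hyx, mul_sub, mul_one, ← mul_assoc, ih, sub_mul,
      smul_mul_assoc, mul_assoc, ← pow_succ, h1]
    push_cast
    rw [add_smul, one_smul]
    abel

lemma aux_pow_xy (x y : A) (h : x * y - y * x = 1) (a : ℕ) :
    y * x ^ a = x ^ a * y - (a : k) • x ^ (a - 1) := by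
  induction a with
  | zero => simp
  | succ a ih =>
    have hyx : y * x = x * y - 1 := by rw [← h]; abel
    have h1 : (a : k) • (x ^ (a-1) * x) = (a : k) • x ^ a := by
      cases a with
      | zero => simp
      | succ a' => rw [Nat.succ_sub_one, ← pow_succ]
    rw [pow_succ, ← mul_assoc, ih, sub_mul, mul_assoc, hyx, mul_sub, mul_one,
      ← mul_assoc, ← pow_succ, smul_mul_assoc, h1]
    push_cast
    rw [add_smul, one_smul]
    abel

omit [CharZero k] in
lemma aux_xz_pow (x z : A) (c : k) (h : x * z = c • (z * x)) (m : ℕ) :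
    x * z ^ m = c ^ m • (z ^ m * x) := by
  induction m with
  | zero => simp
  | succ m ih =>
    rw [pow_succ, ← mul_assoc, ih, smul_mul_assoc, mul_assoc, h, pow_succ]
    rw [mul_smul_comm, smul_smul, mul_assoc]

omit [CharZero k] in
lemma aux_repr_sum_eval {ι : Type*} [DecidableEq ι] (bA : Module.Basis ι k A) (F : ι →₀ k)
    (e : ι → k → k) (σ : ι → ι) (P : ι) :
    bA.repr (F.sum fun p c => (e p c) • bA (σ p)) P
      = F.sum (fun p c => if σ p = P then e p c else 0) := by
  rw [map_finsuppSum, Finsupp.sum_apply]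
  refine Finsupp.sum_congr fun p _ => ?_
  rw [map_smul, Module.Basis.repr_self, Finsupp.smul_single, smul_eq_mul, mul_one,
    Finsupp.single_apply]

omit [CharZero k] in
lemma aux_sum_if_point {ι : Type*} [DecidableEq ι] (F : ι →₀ k) (e : ι → k → k)
    (cond : ι → Prop) [DecidablePred cond] (p0 : ι)
    (h1 : cond p0) (h2 : ∀ p, cond p → p ≠ p0 → ∀ c, e p c = 0) (h3 : e p0 0 = 0) :
    F.sum (fun p c => if cond p then e p c else 0) = e p0 (F p0) := by
  have key : ∀ p ∈ F.support, (if cond p then e p (F p) else 0)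
      = (if p = p0 then e p (F p) else 0) := by
    intro p _
    by_cases hp : p = p0
    · subst hp; simp [h1]
    · by_cases hc : cond p
      · simp [hc, hp, h2 p hc hp (F p)]
      · simp [hc, hp]
  rw [Finsupp.sum_congr (g2 := fun p c => if p = p0 then e p c else 0) key,
    Finsupp.sum_ite_eq']
  split
  · rfl
  · rw [Finsupp.notMem_support_iff.mp ‹_›, h3]

omit [CharZero k] in
lemma aux_sum_if_zero {ι : Type*} (F : ι →₀ k) (e : ι → k → k)
    (cond : ι → Prop) [DecidablePred cond]
    (h : ∀ p c, cond p → e p c = 0) :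
    F.sum (fun p c => if cond p then e p c else 0) = 0 := by
  apply Finset.sum_eq_zero
  intro p _
  dsimp only
  split
  · exact h p (F p) ‹_›
  · rfl

end aux

/-- Let `λ ∈ k*` have finite multiplicative order `n` (char k = 0). Then the
center of the algebra `A` generated by `x, y, z` with relations `x*y - y*x = 1`,
`x*z = λ • (z*x)`, `y*z = λ⁻¹ • (z*y)` (with PBW basis `x^a y^b z^c`) is exactly the
polynomial subalgebra `k[z^n]` generated by `z^n`. -/
theorem stmt_3 {k : Type*} [Field k] [CharZero k] {A : Type*} [Ring A] [Algebra k A]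
    (u : kˣ) (n : ℕ) (hn0 : 0 < n) (hn : orderOf u = n) (x y z : A)
    (hxy : x * y - y * x = 1)
    (hxz : x * z = (u : k) • (z * x))
    (hyz : y * z = ((u⁻¹ : kˣ) : k) • (z * y))
    (bA : Module.Basis (ℕ × ℕ × ℕ) k A)
    (hbA : ∀ p : ℕ × ℕ × ℕ, bA p = x ^ p.1 * y ^ p.2.1 * z ^ p.2.2) :
    Subalgebra.center k A = Algebra.adjoin k {z ^ n} := by
  classical
  set v : k := (u : k) with hv
  set w : k := ((u⁻¹ : kˣ) : k) with hw
  have hwv : w * v = 1 := by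
    rw [hv, hw, ← Units.val_mul, inv_mul_cancel, Units.val_one]
  have hvw : v * w = 1 := by rw [mul_comm]; exact hwv
  have hvn : v ^ n = 1 := by
    rw [hv, ← Units.val_pow_eq_pow_val, ← hn, pow_orderOf_eq_one, Units.val_one]
  have hwn : w ^ n = 1 := by
    have h1 : u⁻¹ ^ n = 1 := by rw [inv_pow, ← hn, pow_orderOf_eq_one, inv_one]
    rw [hw, ← Units.val_pow_eq_pow_val, h1, Units.val_one]
  -- products with basis elements
  have hbx : ∀ p : ℕ × ℕ × ℕ, x * bA p = bA (p.1 + 1, p.2.1, p.2.2) := by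
    intro p
    rw [hbA, hbA]
    simp only [← mul_assoc, ← pow_succ']
  have hbxr : ∀ p : ℕ × ℕ × ℕ, bA p * x
      = (w ^ p.2.2) • bA (p.1 + 1, p.2.1, p.2.2)
        - (w ^ p.2.2 * p.2.1) • bA (p.1, p.2.1 - 1, p.2.2) := by
    intro p
    obtain ⟨a, b, c⟩ := p
    have hz : z ^ c * x = w ^ c • (x * z ^ c) := by
      have h2 := aux_xz_pow (k := k) x z v hxz c
      rw [h2, smul_smul, ← mul_pow, hwv, one_pow, one_smul]
    rw [hbA, hbA, hbA]
    simp only []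
    calc x ^ a * y ^ b * z ^ c * x
        = x ^ a * y ^ b * (z ^ c * x) := by rw [mul_assoc]
      _ = x ^ a * y ^ b * (w ^ c • (x * z ^ c)) := by rw [hz]
      _ = w ^ c • (x ^ a * (y ^ b * x) * z ^ c) := by
          rw [mul_smul_comm, ← mul_assoc (x ^ a * y ^ b) x (z ^ c),
            mul_assoc (x ^ a) (y ^ b) x]
      _ = w ^ c • (x ^ a * (x * y ^ b - (b : k) • y ^ (b - 1)) * z ^ c) := by
          rw [aux_pow_yx (k := k) x y hxy b]
      _ = (w ^ c) • (x ^ (a + 1) * y ^ b * z ^ c)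
            - (w ^ c * b) • (x ^ a * y ^ (b - 1) * z ^ c) := by
          rw [mul_sub, sub_mul, smul_sub, ← mul_assoc (x ^ a) x (y ^ b), ← pow_succ x a,
            mul_smul_comm, smul_mul_assoc, smul_smul]
  have hby : ∀ p : ℕ × ℕ × ℕ, y * bA p
      = bA (p.1, p.2.1 + 1, p.2.2) - (p.1 : k) • bA (p.1 - 1, p.2.1, p.2.2) := by
    intro p
    obtain ⟨a, b, c⟩ := p
    rw [hbA, hbA, hbA]
    simp only []
    calc y * (x ^ a * y ^ b * z ^ c)
        = (y * x ^ a) * y ^ b * z ^ c := by rw [← mul_assoc, ← mul_assoc]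
      _ = (x ^ a * y - (a : k) • x ^ (a - 1)) * y ^ b * z ^ c := by
          rw [aux_pow_xy (k := k) x y hxy a]
      _ = x ^ a * y ^ (b + 1) * z ^ c - (a : k) • (x ^ (a - 1) * y ^ b * z ^ c) := by
          rw [sub_mul, sub_mul, smul_mul_assoc, smul_mul_assoc,
            mul_assoc (x ^ a) y (y ^ b), ← pow_succ']
  have hbyr : ∀ p : ℕ × ℕ × ℕ, bA p * y = (v ^ p.2.2) • bA (p.1, p.2.1 + 1, p.2.2) := by
    intro p
    obtain ⟨a, b, c⟩ := p
    have hz : z ^ c * y = v ^ c • (y * z ^ c) := by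
      have h2 := aux_xz_pow (k := k) y z w hyz c
      rw [h2, smul_smul, ← mul_pow, hvw, one_pow, one_smul]
    rw [hbA, hbA]
    simp only []
    calc x ^ a * y ^ b * z ^ c * y
        = x ^ a * y ^ b * (z ^ c * y) := by rw [mul_assoc]
      _ = x ^ a * y ^ b * (v ^ c • (y * z ^ c)) := by rw [hz]
      _ = v ^ c • (x ^ a * y ^ (b + 1) * z ^ c) := by
          rw [mul_smul_comm, ← mul_assoc (x ^ a * y ^ b) y (z ^ c),
            mul_assoc (x ^ a) (y ^ b) y, ← pow_succ y b]
  apply le_antisymm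
  · intro m hm
    have hc := Subalgebra.mem_center_iff.mp hm
    set F := bA.repr m with hF
    have hmF : m = F.sum fun p c => c • bA p := by
      conv_lhs => rw [← bA.linearCombination_repr m]
      rw [Finsupp.linearCombination_apply]
    have hxm : x * m = F.sum fun p c => c • bA (p.1 + 1, p.2.1, p.2.2) := by
      conv_lhs => rw [hmF]
      rw [Finsupp.sum, Finset.mul_sum, Finsupp.sum]
      exact Finset.sum_congr rfl fun p _ => by rw [mul_smul_comm, hbx]
    have hmx : m * x = (F.sum fun p c => (c * w ^ p.2.2) • bA (p.1 + 1, p.2.1, p.2.2))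
        - (F.sum fun p c => (c * (w ^ p.2.2 * p.2.1)) • bA (p.1, p.2.1 - 1, p.2.2)) := by
      conv_lhs => rw [hmF]
      rw [← Finsupp.sum_sub, Finsupp.sum, Finset.sum_mul, Finsupp.sum]
      refine Finset.sum_congr rfl fun p _ => ?_
      rw [smul_mul_assoc, hbxr p, smul_sub, smul_smul, smul_smul]
    have hym : y * m = (F.sum fun p c => c • bA (p.1, p.2.1 + 1, p.2.2))
        - (F.sum fun p c => (c * p.1) • bA (p.1 - 1, p.2.1, p.2.2)) := by
      conv_lhs => rw [hmF]
      rw [← Finsupp.sum_sub, Finsupp.sum, Finset.mul_sum, Finsupp.sum]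
      refine Finset.sum_congr rfl fun p _ => ?_
      rw [mul_smul_comm, hby p, smul_sub, smul_smul]
    have hmy : m * y = F.sum fun p c => (c * v ^ p.2.2) • bA (p.1, p.2.1 + 1, p.2.2) := by
      conv_lhs => rw [hmF]
      rw [Finsupp.sum, Finset.sum_mul, Finsupp.sum]
      refine Finset.sum_congr rfl fun p _ => ?_
      rw [smul_mul_assoc, hbyr p, smul_smul]
    have Hx : ∀ P : ℕ × ℕ × ℕ, bA.repr (x * m) P = bA.repr (m * x) P :=
      fun P => by rw [hc x]
    have Hy : ∀ P : ℕ × ℕ × ℕ, bA.repr (y * m) P = bA.repr (m * y) P :=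
      fun P => by rw [hc y]
    -- relation Rx
    have Rx : ∀ a b c : ℕ, F (a, b, c) * v ^ c
        = F (a, b, c) - F (a + 1, b + 1, c) * ((b : k) + 1) := by
      intro a b c
      have h0 := Hx (a + 1, b, c)
      rw [hxm, hmx, map_sub, Finsupp.sub_apply,
        aux_repr_sum_eval bA F (fun _ c => c) (fun p => (p.1 + 1, p.2.1, p.2.2)),
        aux_repr_sum_eval bA F (fun p c => c * w ^ p.2.2)
          (fun p => (p.1 + 1, p.2.1, p.2.2)),
        aux_repr_sum_eval bA F (fun p c => c * (w ^ p.2.2 * p.2.1))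
          (fun p => (p.1, p.2.1 - 1, p.2.2))] at h0
      rw [aux_sum_if_point F (fun _ c => c)
          (fun p => (p.1 + 1, p.2.1, p.2.2) = (a + 1, b, c)) (a, b, c) rfl
          (fun p hp hne c' => absurd (by
            obtain ⟨pa, pb, pc⟩ := p
            simp only [Prod.mk.injEq] at hp ⊢
            omega) hne) rfl,
        aux_sum_if_point F (fun p c => c * w ^ p.2.2)
          (fun p => (p.1 + 1, p.2.1, p.2.2) = (a + 1, b, c)) (a, b, c) rfl
          (fun p hp hne c' => absurd (by
            obtain ⟨pa, pb, pc⟩ := p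
            simp only [Prod.mk.injEq] at hp ⊢
            omega) hne) (zero_mul _),
        aux_sum_if_point F (fun p c => c * (w ^ p.2.2 * p.2.1))
          (fun p => (p.1, p.2.1 - 1, p.2.2) = (a + 1, b, c)) (a + 1, b + 1, c)
          (by simp)
          (fun p hp hne c' => by
            obtain ⟨pa, pb, pc⟩ := p
            simp only [Prod.mk.injEq] at hp
            obtain ⟨h1', h2', h3'⟩ := hp
            have hpb : pb = 0 := by
              rcases Nat.eq_zero_or_pos pb with h | h
              · exact h
              · exact absurd (by
                  have : pb = b + 1 := by omega
                  rw [h1', this, h3']) hne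
            rw [hpb]
            simp) (zero_mul _)] at h0
      have hwc : w ^ c * v ^ c = 1 := by rw [← mul_pow, hwv, one_pow]
      push_cast at h0 ⊢
      linear_combination v ^ c * h0 + (F (a, b, c) - F (a + 1, b + 1, c) * ((b : k) + 1)) * hwc
    -- relation E1
    have E1 : ∀ b c : ℕ, F (0, b + 1, c) = 0 := by
      intro b c
      have h0 := Hx (0, b, c)
      rw [hxm, hmx, map_sub, Finsupp.sub_apply,
        aux_repr_sum_eval bA F (fun _ c => c) (fun p => (p.1 + 1, p.2.1, p.2.2)),
        aux_repr_sum_eval bA F (fun p c => c * w ^ p.2.2)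
          (fun p => (p.1 + 1, p.2.1, p.2.2)),
        aux_repr_sum_eval bA F (fun p c => c * (w ^ p.2.2 * p.2.1))
          (fun p => (p.1, p.2.1 - 1, p.2.2))] at h0
      rw [aux_sum_if_zero F (fun _ c => c)
          (fun p => (p.1 + 1, p.2.1, p.2.2) = (0, b, c))
          (fun p c' hp => absurd hp (by
            obtain ⟨pa, pb, pc⟩ := p
            simp only [Prod.mk.injEq]
            omega)),
        aux_sum_if_zero F (fun p c => c * w ^ p.2.2)
          (fun p => (p.1 + 1, p.2.1, p.2.2) = (0, b, c))
          (fun p c' hp => absurd hp (by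
            obtain ⟨pa, pb, pc⟩ := p
            simp only [Prod.mk.injEq]
            omega)),
        aux_sum_if_point F (fun p c => c * (w ^ p.2.2 * p.2.1))
          (fun p => (p.1, p.2.1 - 1, p.2.2) = (0, b, c)) (0, b + 1, c)
          (by simp)
          (fun p hp hne c' => by
            obtain ⟨pa, pb, pc⟩ := p
            simp only [Prod.mk.injEq] at hp
            obtain ⟨h1', h2', h3'⟩ := hp
            have hpb : pb = 0 := by
              rcases Nat.eq_zero_or_pos pb with h | h
              · exact h
              · exact absurd (by
                  have : pb = b + 1 := by omega
                  rw [h1', this, h3']) hne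
            rw [hpb]
            simp) (zero_mul _)] at h0
      have h1 : F (0, b + 1, c) * (w ^ c * ((b : k) + 1)) = 0 := by
        push_cast at h0
        linear_combination h0
      have hwne : w ^ c * ((b : k) + 1) ≠ 0 :=
        mul_ne_zero (pow_ne_zero c (Units.ne_zero u⁻¹)) (Nat.cast_add_one_ne_zero b)
      exact (mul_eq_zero.mp h1).resolve_right hwne
    -- relation Ry
    have Ry : ∀ a b c : ℕ, F (a, b, c) - F (a + 1, b + 1, c) * ((a : k) + 1)
        = F (a, b, c) * v ^ c := by
      intro a b c
      have h0 := Hy (a, b + 1, c)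
      rw [hym, hmy, map_sub, Finsupp.sub_apply,
        aux_repr_sum_eval bA F (fun _ c => c) (fun p => (p.1, p.2.1 + 1, p.2.2)),
        aux_repr_sum_eval bA F (fun p c => c * p.1)
          (fun p => (p.1 - 1, p.2.1, p.2.2)),
        aux_repr_sum_eval bA F (fun p c => c * v ^ p.2.2)
          (fun p => (p.1, p.2.1 + 1, p.2.2))] at h0
      rw [aux_sum_if_point F (fun _ c => c)
          (fun p => (p.1, p.2.1 + 1, p.2.2) = (a, b + 1, c)) (a, b, c) rfl
          (fun p hp hne c' => absurd (by
            obtain ⟨pa, pb, pc⟩ := p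
            simp only [Prod.mk.injEq] at hp ⊢
            omega) hne) rfl,
        aux_sum_if_point F (fun p c => c * p.1)
          (fun p => (p.1 - 1, p.2.1, p.2.2) = (a, b + 1, c)) (a + 1, b + 1, c)
          (by simp)
          (fun p hp hne c' => by
            obtain ⟨pa, pb, pc⟩ := p
            simp only [Prod.mk.injEq] at hp
            obtain ⟨h1', h2', h3'⟩ := hp
            have hpa : pa = 0 := by
              rcases Nat.eq_zero_or_pos pa with h | h
              · exact h
              · exact absurd (by
                  have : pa = a + 1 := by omega
                  rw [this, h2', h3']) hne
            rw [hpa]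
            simp) (zero_mul _),
        aux_sum_if_point F (fun p c => c * v ^ p.2.2)
          (fun p => (p.1, p.2.1 + 1, p.2.2) = (a, b + 1, c)) (a, b, c) rfl
          (fun p hp hne c' => absurd (by
            obtain ⟨pa, pb, pc⟩ := p
            simp only [Prod.mk.injEq] at hp ⊢
            omega) hne) (zero_mul _)] at h0
      push_cast at h0 ⊢
      linear_combination h0
    -- relation E2
    have E2 : ∀ a c : ℕ, F (a + 1, 0, c) = 0 := by
      intro a c
      have h0 := Hy (a, 0, c)
      rw [hym, hmy, map_sub, Finsupp.sub_apply,
        aux_repr_sum_eval bA F (fun _ c => c) (fun p => (p.1, p.2.1 + 1, p.2.2)),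
        aux_repr_sum_eval bA F (fun p c => c * p.1)
          (fun p => (p.1 - 1, p.2.1, p.2.2)),
        aux_repr_sum_eval bA F (fun p c => c * v ^ p.2.2)
          (fun p => (p.1, p.2.1 + 1, p.2.2))] at h0
      rw [aux_sum_if_zero F (fun _ c => c)
          (fun p => (p.1, p.2.1 + 1, p.2.2) = (a, 0, c))
          (fun p c' hp => absurd hp (by
            obtain ⟨pa, pb, pc⟩ := p
            simp only [Prod.mk.injEq]
            omega)),
        aux_sum_if_zero F (fun p c => c * v ^ p.2.2)
          (fun p => (p.1, p.2.1 + 1, p.2.2) = (a, 0, c))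
          (fun p c' hp => absurd hp (by
            obtain ⟨pa, pb, pc⟩ := p
            simp only [Prod.mk.injEq]
            omega)),
        aux_sum_if_point F (fun p c => c * p.1)
          (fun p => (p.1 - 1, p.2.1, p.2.2) = (a, 0, c)) (a + 1, 0, c)
          (by simp)
          (fun p hp hne c' => by
            obtain ⟨pa, pb, pc⟩ := p
            simp only [Prod.mk.injEq] at hp
            obtain ⟨h1', h2', h3'⟩ := hp
            have hpa : pa = 0 := by
              rcases Nat.eq_zero_or_pos pa with h | h
              · exact h
              · exact absurd (by
                  have : pa = a + 1 := by omega
                  rw [this, h2', h3']) hne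
            rw [hpa]
            simp) (zero_mul _)] at h0
      have h1 : F (a + 1, 0, c) * ((a : k) + 1) = 0 := by
        push_cast at h0
        linear_combination -h0
      exact (mul_eq_zero.mp h1).resolve_right (Nat.cast_add_one_ne_zero a)
    -- analysis
    have D1 : ∀ a b c : ℕ, a ≠ b → F (a + 1, b + 1, c) = 0 := by
      intro a b c hab
      have h3 : F (a + 1, b + 1, c) * ((b : k) + 1)
          = F (a + 1, b + 1, c) * ((a : k) + 1) := by
        linear_combination Rx a b c + Ry a b c
      by_contra hF0
      have hne : (b : k) + 1 ≠ (a : k) + 1 := by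
        simp only [add_left_inj, Ne, Nat.cast_inj]
        exact fun h => hab h.symm
      exact hne (mul_left_cancel₀ hF0 h3)
    have D2 : ∀ c : ℕ, v ^ c ≠ 1 → ∀ t, F (t, t, c) = 0 := by
      intro c hvc t
      by_contra hF0
      have grow : ∀ j : ℕ, F (t + j, t + j, c) ≠ 0 := by
        intro j
        induction j with
        | zero => simpa using hF0
        | succ j ih =>
          intro h0
          have h0' : F ((t + j) + 1, (t + j) + 1, c) = 0 := h0
          have hz2 : F (t + j, t + j, c) * (v ^ c - 1) = 0 := by
            linear_combination Rx (t + j) (t + j) c - (((t + j : ℕ) : k) + 1) * h0'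
          rcases mul_eq_zero.mp hz2 with h | h
          · exact ih h
          · exact hvc (by linear_combination h)
      have hle : ∀ j : ℕ, t + j ≤ F.support.sup (fun p => p.1) :=
        fun j => Finset.le_sup (f := fun p : ℕ × ℕ × ℕ => p.1)
          (Finsupp.mem_support_iff.mpr (grow j))
      have := hle (F.support.sup (fun p => p.1) + 1)
      omega
    have D3 : ∀ c : ℕ, v ^ c = 1 → ∀ t, F (t + 1, t + 1, c) = 0 := by
      intro c hvc t
      have h1 := Rx t t c
      rw [hvc, mul_one] at h1
      have h2 : F (t + 1, t + 1, c) * ((t : k) + 1) = 0 := by linear_combination h1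
      exact (mul_eq_zero.mp h2).resolve_right (Nat.cast_add_one_ne_zero t)
    have key : ∀ p : ℕ × ℕ × ℕ, F p ≠ 0 → p.1 = 0 ∧ p.2.1 = 0 ∧ n ∣ p.2.2 := by
      intro p hp
      obtain ⟨a, b, c⟩ := p
      have hvc : v ^ c = 1 := by
        by_contra h
        rcases Nat.eq_zero_or_pos a with ha | ha
        · subst ha
          rcases Nat.eq_zero_or_pos b with hb | hb
          · subst hb
            exact hp (D2 c h 0)
          · obtain ⟨b', rfl⟩ : ∃ b', b = b' + 1 := ⟨b - 1, by omega⟩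
            exact hp (E1 b' c)
        · obtain ⟨a', rfl⟩ : ∃ a', a = a' + 1 := ⟨a - 1, by omega⟩
          rcases Nat.eq_zero_or_pos b with hb | hb
          · subst hb
            exact hp (E2 a' c)
          · obtain ⟨b', rfl⟩ : ∃ b', b = b' + 1 := ⟨b - 1, by omega⟩
            rcases eq_or_ne a' b' with hab | hab
            · subst hab
              exact hp (D2 c h (a' + 1))
            · exact hp (D1 a' b' c hab)
      have ha0 : a = 0 ∧ b = 0 := by
        rcases Nat.eq_zero_or_pos a with ha | ha
        · subst ha
          rcases Nat.eq_zero_or_pos b with hb | hb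
          · exact ⟨rfl, hb⟩
          · obtain ⟨b', rfl⟩ : ∃ b', b = b' + 1 := ⟨b - 1, by omega⟩
            exact absurd (E1 b' c) hp
        · obtain ⟨a', rfl⟩ : ∃ a', a = a' + 1 := ⟨a - 1, by omega⟩
          rcases Nat.eq_zero_or_pos b with hb | hb
          · subst hb
            exact absurd (E2 a' c) hp
          · obtain ⟨b', rfl⟩ : ∃ b', b = b' + 1 := ⟨b - 1, by omega⟩
            rcases eq_or_ne a' b' with hab | hab
            · subst hab
              exact absurd (D3 c hvc a') hp
            · exact absurd (D1 a' b' c hab) hp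
      refine ⟨ha0.1, ha0.2, ?_⟩
      have huc : u ^ c = 1 := by
        ext
        rw [Units.val_pow_eq_pow_val, Units.val_one]
        exact hvc
      rw [← hn]
      exact orderOf_dvd_of_pow_eq_one huc
    -- conclude membership
    rw [hmF, Finsupp.sum]
    apply sum_mem
    intro p hps
    obtain ⟨h1, h2, j, hj⟩ := key p (Finsupp.mem_support_iff.mp hps)
    apply Subalgebra.smul_mem
    have hbp : bA p = (z ^ n) ^ j := by
      obtain ⟨a, b, c⟩ := p
      simp only at h1 h2 hj
      rw [hbA]
      simp only [h1, h2, hj, pow_zero, one_mul, pow_mul]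
    rw [hbp]
    exact pow_mem (Algebra.subset_adjoin (Set.mem_singleton _)) j
  · -- adjoin k {z^n} ≤ center
    refine Algebra.adjoin_le ?_
    intro t ht
    rw [Set.mem_singleton_iff] at ht
    subst ht
    rw [SetLike.mem_coe, Subalgebra.mem_center_iff]
    intro g
    have hCx : Commute (z ^ n) x := by
      show z ^ n * x = x * z ^ n
      rw [aux_xz_pow (k := k) x z v hxz n, hvn, one_smul]
    have hCy : Commute (z ^ n) y := by
      show z ^ n * y = y * z ^ n
      rw [aux_xz_pow (k := k) y z w hyz n, hwn, one_smul]
    have hCz : Commute (z ^ n) z := ((Commute.refl z).pow_left n)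
    have hb : ∀ p : ℕ × ℕ × ℕ, z ^ n * bA p = bA p * z ^ n := by
      intro p
      rw [hbA]
      exact (((hCx.pow_right p.1).mul_right (hCy.pow_right p.2.1)).mul_right
        (hCz.pow_right p.2.2))
    conv_lhs => rw [← bA.linearCombination_repr g]
    conv_rhs => rw [← bA.linearCombination_repr g]
    rw [Finsupp.linearCombination_apply, Finsupp.sum, Finset.sum_mul, Finset.mul_sum]
    refine Finset.sum_congr rfl fun p _ => ?_
    rw [smul_mul_assoc, mul_smul_comm, hb]
end

section
/- Suppose the family (λ_{i,j})_{1≤i<j≤n} generates a free abelian subgroup of k* of rank n(n-1)/2, and extend to a multiplicatively antisymmetric matrix by λ_{j,i} = λ_{i,j}^{-1}, λ_{i,i}=1. Fix r ≤ n and let Q(Λ) = (λ̃_{k,i}) be the associated (n+r)×(n+r) block matrix. Let C = { ρ ∈ ℕ^{r+n} : for each i, ρ_i = 0 or ∏_k λ̃_{k,i}^{ρ_k} = 1 }. If ρ ∈ C and there exists i > 2r with ρ_i ≠ 0, then ρ = ρ_i · e_i (all other coordinates of ρ vanish). -/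
/-- The `(n+r) × (n+r)` block matrix `Q(Λ)` (0-based indices: positions `0,…,r-1` are
the `x`-indices, positions `r,…,r+n-1` the `y`-indices): blocks
`[[Λ_r, Λ_{r,n}⁻¹],[Λ_{n,r}⁻¹, Λ]]`. -/
def Qmat {k : Type*} [Field k] (r : ℕ) (lam : ℕ → ℕ → kˣ) : ℕ → ℕ → kˣ := fun i j =>
  if i < r then
    (if j < r then lam i j else (lam i (j - r))⁻¹)
  else
    (if j < r then (lam (i - r) j)⁻¹ else lam (i - r) (j - r))

open Finset

lemma col_indep {k : Type*} [Field k] {n : ℕ} (lam : ℕ → ℕ → kˣ)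
    (hanti : ∀ i j, i < n → j < n → lam i j * lam j i = 1)
    (hdiag : ∀ i, i < n → lam i i = 1)
    (hfree : ∀ m : ℕ → ℕ → ℤ,
      (∏ i ∈ range n, ∏ j ∈ Ico (i + 1) n, lam i j ^ m i j) = 1 →
      ∀ i j, i < j → j < n → m i j = 0)
    (a : ℕ) (ha : a < n) (e : ℕ → ℤ)
    (h : (∏ s ∈ range n, lam s a ^ e s) = 1) :
    ∀ s, s < n → s ≠ a → e s = 0 := by
  set m : ℕ → ℕ → ℤ := fun i j => if j = a then e i else if i = a then -(e j) else 0 with hm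
  have hsplit : ∀ (f : ℕ → kˣ), (∏ s ∈ range n, f s)
      = ((∏ s ∈ range a, f s) * f a) * ∏ s ∈ Ico (a+1) n, f s := by
    intro f
    rw [← Finset.prod_range_mul_prod_Ico f (by omega : a+1 ≤ n), Finset.prod_range_succ]
  have key : (∏ i ∈ range n, ∏ j ∈ Ico (i + 1) n, lam i j ^ m i j) = 1 := by
    have h1 : ∀ x ∈ range a, (∏ j ∈ Ico (x+1) n, lam x j ^ m x j) = lam x a ^ e x := by
      intro x hx
      simp only [mem_range] at hx
      rw [Finset.prod_eq_single_of_mem a (by simp [mem_Ico]; omega)]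
      · simp [hm]
      · intro b _ hba
        simp only [hm]
        rw [if_neg hba, if_neg (by omega : ¬ x = a), zpow_zero]
    have h2 : (∏ j ∈ Ico (a+1) n, lam a j ^ m a j) = ∏ j ∈ Ico (a+1) n, lam j a ^ e j := by
      apply Finset.prod_congr rfl
      intro j hj
      simp only [mem_Ico] at hj
      have hja : lam j a = (lam a j)⁻¹ :=
        eq_inv_of_mul_eq_one_right (hanti a j ha hj.2)
      have hmaj : m a j = -(e j) := by simp [hm, (show j ≠ a by omega)]
      rw [hmaj, hja, inv_zpow']
    have h3 : ∀ x ∈ Ico (a+1) n, (∏ j ∈ Ico (x+1) n, lam x j ^ m x j) = 1 := by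
      intro x hx
      simp only [mem_Ico] at hx
      apply Finset.prod_eq_one
      intro j hj
      simp only [mem_Ico] at hj
      simp only [hm]
      rw [if_neg (by omega : ¬ j = a), if_neg (by omega : ¬ x = a), zpow_zero]
    rw [hsplit (fun i => ∏ j ∈ Ico (i + 1) n, lam i j ^ m i j)]
    rw [Finset.prod_congr rfl h1, h2, Finset.prod_eq_one h3, mul_one]
    rw [hsplit (fun s => lam s a ^ e s)] at h
    rw [hdiag a ha, one_zpow, mul_one] at h
    exact h
  have hres := hfree m key
  intro s hs hsa
  rcases lt_trichotomy s a with hlt | heq | hgt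
  · have := hres s a hlt ha
    simpa [hm] using this
  · exact absurd heq hsa
  · have := hres a s hgt hs
    rw [show m a s = -(e s) by simp [hm, hsa]] at this
    exact neg_eq_zero.mp this

/-- Suppose `(λ_{i,j})_{i<j<n}` is multiplicatively independent in `k*`
(free abelian of maximal rank), extended to a multiplicatively antisymmetric matrix.
Let `C ⊆ ℕ^{r+n}` consist of those `ρ` such that for each `i`, `ρ_i = 0` or
`∏_k λ̃_{k,i}^{ρ_k} = 1` (where `λ̃ = Q(Λ)`). If `ρ ∈ C` and `ρ_i ≠ 0` for some index
`i` in the purely quantum range (0-based: `2r ≤ i < r+n`), then all other coordinates of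
`ρ` vanish, i.e. `ρ = ρ_i · e_i`. -/
theorem stmt_9 {k : Type*} [Field k] {n r : ℕ} (hr : r ≤ n)
    (lam : ℕ → ℕ → kˣ)
    (hanti : ∀ i j, i < n → j < n → lam i j * lam j i = 1)
    (hdiag : ∀ i, i < n → lam i i = 1)
    (hfree : ∀ m : ℕ → ℕ → ℤ,
      (∏ i ∈ range n, ∏ j ∈ Ico (i + 1) n, lam i j ^ m i j) = 1 →
      ∀ i j, i < j → j < n → m i j = 0)
    (ρ : ℕ → ℕ) (hρsupp : ∀ i, r + n ≤ i → ρ i = 0)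
    (hC : ∀ i < r + n, ρ i = 0 ∨ (∏ t ∈ range (r + n), Qmat r lam t i ^ ρ t) = 1)
    (i : ℕ) (hi1 : 2 * r ≤ i) (hi2 : i < r + n) (hρi : ρ i ≠ 0) :
    ∀ m, m ≠ i → ρ m = 0 := by
  have hir : r ≤ i := by omega
  have ha : i - r < n := by omega
  have har : r ≤ i - r := by omega
  set a := i - r with hadef
  have hia : i = r + a := by omega
  -- split a column product into x-part and y-part
  have hsplitcol : ∀ c : ℕ, (∏ t ∈ range (r+n), Qmat r lam t c ^ ρ t)
      = (∏ t ∈ range r, Qmat r lam t c ^ ρ t) * ∏ u ∈ range n, Qmat r lam (r+u) c ^ ρ (r+u) := by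
    intro c
    rw [← Finset.prod_range_mul_prod_Ico _ (by omega : r ≤ r + n),
        Finset.prod_Ico_eq_prod_range]
    simp
  -- column i
  have hci := (hC i hi2).resolve_left hρi
  rw [hsplitcol] at hci
  have hQ1 : ∀ t, t < r → Qmat r lam t i = (lam t a)⁻¹ := by
    intro t ht
    simp [Qmat, ht, Nat.not_lt.mpr hir, hadef]
  have hQ2 : ∀ u : ℕ, Qmat r lam (r+u) i = lam u a := by
    intro u
    simp [Qmat, Nat.not_lt.mpr hir, hadef]
  have e1 : (∏ t ∈ range r, Qmat r lam t i ^ ρ t) = ∏ t ∈ range r, ((lam t a)⁻¹) ^ ρ t :=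
    Finset.prod_congr rfl (fun t ht => by rw [hQ1 t (mem_range.mp ht)])
  have e2 : (∏ u ∈ range n, Qmat r lam (r+u) i ^ ρ (r+u)) = ∏ u ∈ range n, lam u a ^ ρ (r+u) :=
    Finset.prod_congr rfl (fun u _ => by rw [hQ2 u])
  rw [e1, e2] at hci
  -- convert to a signed-exponent single product over column a
  have hprod_e : (∏ s ∈ range n, lam s a ^ ((ρ (r+s) : ℤ) - (if s < r then (ρ s : ℤ) else 0))) = 1 := by
    have hsplit2 : (∏ s ∈ range n, lam s a ^ ((ρ (r+s) : ℤ) - (if s < r then (ρ s : ℤ) else 0)))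
        = (∏ s ∈ range n, lam s a ^ (ρ (r+s) : ℤ)) *
          ∏ s ∈ range n, lam s a ^ (-(if s < r then (ρ s : ℤ) else 0)) := by
      rw [← Finset.prod_mul_distrib]
      apply Finset.prod_congr rfl
      intro s _
      rw [← zpow_add, sub_eq_add_neg]
    have hneg : (∏ s ∈ range n, lam s a ^ (-(if s < r then (ρ s : ℤ) else 0)))
        = ∏ s ∈ range r, ((lam s a)⁻¹) ^ ρ s := by
      rw [← Finset.prod_subset (Finset.range_subset_range.mpr hr)
        (fun x _ hx => by rw [if_neg (by simpa using hx), neg_zero, zpow_zero])]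
      apply Finset.prod_congr rfl
      intro s hs
      rw [if_pos (mem_range.mp hs), ← zpow_natCast ((lam s a)⁻¹) (ρ s), inv_zpow, ← zpow_neg]
    rw [hsplit2, hneg, mul_comm]
    rw [show (∏ s ∈ range n, lam s a ^ (ρ (r+s) : ℤ)) = ∏ s ∈ range n, lam s a ^ ρ (r+s) from
      Finset.prod_congr rfl (fun s _ => zpow_natCast _ _)]
    exact hci
  have hkey := col_indep lam hanti hdiag hfree a ha _ hprod_e
  -- all x-coordinates vanish
  have hxr : ∀ m, m < r → ρ m = 0 := by
    intro m hm
    by_contra hne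
    have hcm := (hC m (by omega)).resolve_left hne
    rw [hsplitcol] at hcm
    have hQ1' : ∀ t, t < r → Qmat r lam t m = lam t m := by
      intro t ht
      simp [Qmat, ht, hm]
    have hQ2' : ∀ u : ℕ, Qmat r lam (r+u) m = (lam u m)⁻¹ := by
      intro u
      simp [Qmat, hm]
    have e1' : (∏ t ∈ range r, Qmat r lam t m ^ ρ t) = ∏ t ∈ range r, lam t m ^ ρ t :=
      Finset.prod_congr rfl (fun t ht => by rw [hQ1' t (mem_range.mp ht)])
    have e2' : (∏ u ∈ range n, Qmat r lam (r+u) m ^ ρ (r+u)) = ∏ u ∈ range n, ((lam u m)⁻¹) ^ ρ (r+u) :=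
      Finset.prod_congr rfl (fun u _ => by rw [hQ2' u])
    rw [e1', e2'] at hcm
    have hprod_f : (∏ s ∈ range n, lam s m ^ ((if s < r then (ρ s : ℤ) else 0) - (ρ (r+s) : ℤ))) = 1 := by
      have hsplit2 : (∏ s ∈ range n, lam s m ^ ((if s < r then (ρ s : ℤ) else 0) - (ρ (r+s) : ℤ)))
          = (∏ s ∈ range n, lam s m ^ (if s < r then (ρ s : ℤ) else 0)) *
            ∏ s ∈ range n, lam s m ^ (-(ρ (r+s) : ℤ)) := by
        rw [← Finset.prod_mul_distrib]
        apply Finset.prod_congr rfl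
        intro s _
        rw [← zpow_add, sub_eq_add_neg]
      have hpos : (∏ s ∈ range n, lam s m ^ (if s < r then (ρ s : ℤ) else 0))
          = ∏ s ∈ range r, lam s m ^ ρ s := by
        rw [← Finset.prod_subset (Finset.range_subset_range.mpr hr)
          (fun x _ hx => by rw [if_neg (by simpa using hx), zpow_zero])]
        apply Finset.prod_congr rfl
        intro s hs
        rw [if_pos (mem_range.mp hs), zpow_natCast]
      have hneg : (∏ s ∈ range n, lam s m ^ (-(ρ (r+s) : ℤ)))
          = ∏ s ∈ range n, ((lam s m)⁻¹) ^ ρ (r+s) := by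
        apply Finset.prod_congr rfl
        intro s _
        rw [← zpow_natCast ((lam s m)⁻¹) (ρ (r+s)), inv_zpow, ← zpow_neg]
      rw [hsplit2, hpos, hneg]
      exact hcm
    have hfa := col_indep lam hanti hdiag hfree m (by omega) _ hprod_f a ha (by omega)
    rw [if_neg (by omega : ¬ a < r), zero_sub, neg_eq_zero] at hfa
    rw [hia] at hρi
    exact hρi (by exact_mod_cast hfa)
  intro m hmne
  rcases lt_or_ge m r with hmr | hmr
  · exact hxr m hmr
  rcases lt_or_ge m (r+n) with hm2 | hm2
  · have hs : m - r < n := by omega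
    have hsa : m - r ≠ a := by omega
    have hes := hkey (m - r) hs hsa
    have hmm : r + (m - r) = m := by omega
    by_cases hsr : m - r < r
    · rw [if_pos hsr, hmm, hxr (m - r) hsr, Nat.cast_zero, sub_zero] at hes
      exact_mod_cast hes
    · rw [if_neg hsr, hmm, sub_zero] at hes
      exact_mod_cast hes
  · exact hρsupp m hm2
end

section
/- With Λ extended multiplicatively antisymmetric from a multiplicatively independent family (λ_{i,j})_{i<j}, and C ⊆ ℕ^{r+n} defined by: ρ ∈ C iff for every index i, either ρ_i = 0 (with additionally ρ_{i+r}=0 when i ≤ r) or ∏_k λ̃_{k,i}^{ρ_k} = 1; then ρ ∈ C if and only if for every relevant index i the condition ∏_k λ̃_{k,i}^{ρ_k} = 1 is equivalent to: ρ_k = ρ_{k+r} for all k ≤ r with k ≠ i, and ρ_k = 0 for all k > 2r with k ≠ i. -/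
open Finset

lemma lam_inv' {k : Type*} [Field k] {n : ℕ} {lam : ℕ → ℕ → kˣ}
    (hanti : ∀ i j, i < n → j < n → lam i j * lam j i = 1)
    {a b : ℕ} (ha : a < n) (hb : b < n) : (lam a b)⁻¹ = lam b a :=
  inv_eq_of_mul_eq_one_right (hanti a b ha hb)

lemma combine' {G : Type*} [CommGroup G] (f : ℕ → G) (m1 m2 : ℕ → ℤ)
    (r n : ℕ) (hr : r ≤ n) :
    (∏ t ∈ range r, f t ^ m1 t) * (∏ s ∈ range n, f s ^ m2 s)
      = ∏ s ∈ range n, f s ^ ((if s < r then m1 s else 0) + m2 s) := by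
  have h1 : (∏ t ∈ range r, f t ^ m1 t)
      = ∏ t ∈ range n, f t ^ (if t < r then m1 t else 0) := by
    rw [← Finset.prod_subset (Finset.range_subset_range.mpr hr)
      (by intro x _ hx; rw [if_neg (by simpa using hx), zpow_zero])]
    exact Finset.prod_congr rfl fun t ht => by rw [if_pos (mem_range.mp ht)]
  rw [h1, ← Finset.prod_mul_distrib]
  exact Finset.prod_congr rfl fun s _ => (zpow_add _ _ _).symm

lemma core' {k : Type*} [Field k] {n : ℕ} (lam : ℕ → ℕ → kˣ)
    (hanti : ∀ i j, i < n → j < n → lam i j * lam j i = 1)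
    (hdiag : ∀ i, i < n → lam i i = 1)
    (hfree : ∀ m : ℕ → ℕ → ℤ,
      (∏ a ∈ range n, ∏ b ∈ Ico (a + 1) n, lam a b ^ m a b) = 1 →
      ∀ a b, a < b → b < n → m a b = 0)
    {j : ℕ} (hj : j < n) (m : ℕ → ℤ) :
    (∏ s ∈ range n, lam s j ^ m s) = 1 ↔ ∀ s, s < n → s ≠ j → m s = 0 := by
  constructor
  · intro h
    set m' : ℕ → ℕ → ℤ := fun a b => if b = j then m a else if a = j then - m b else 0 with hm'
    set Q : kˣ := ∏ b ∈ Ico (j + 1) n, lam b j ^ m b with hQ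
    have hsingle : (∏ s ∈ range n, lam s j ^ m s)
        = (∏ a ∈ range j, lam a j ^ m a) * Q := by
      rw [← Finset.prod_range_mul_prod_Ico _ (Nat.succ_le_of_lt hj),
        Finset.prod_range_succ, hdiag j hj, one_zpow, mul_one]
    have hinner : ∀ a ∈ range n, (∏ b ∈ Ico (a + 1) n, lam a b ^ m' a b)
        = if a < j then lam a j ^ m a else if a = j then Q else 1 := by
      intro a ha
      rcases lt_trichotomy a j with hlt | heq | hgt
      · rw [if_pos hlt]
        rw [Finset.prod_eq_single_of_mem j (mem_Ico.mpr ⟨hlt, hj⟩)]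
        · simp [hm']
        · intro b _ hb
          have : a ≠ j := hlt.ne
          simp [hm', hb, this]
      · subst heq
        rw [if_neg (lt_irrefl _), if_pos rfl, hQ]
        refine Finset.prod_congr rfl fun b hb => ?_
        have hbj : b ≠ a := by have := (mem_Ico.mp hb).1; omega
        have hbn : b < n := (mem_Ico.mp hb).2
        have : m' a b = - m b := by simp [hm', hbj]
        rw [this, zpow_neg, ← inv_zpow, lam_inv' hanti hj hbn]
      · rw [if_neg (by omega), if_neg (by omega)]
        apply Finset.prod_eq_one
        intro b hb
        have hbj : b ≠ j := by have := (mem_Ico.mp hb).1; omega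
        have haj : a ≠ j := by omega
        simp [hm', hbj, haj]
    have hdouble : (∏ a ∈ range n, ∏ b ∈ Ico (a + 1) n, lam a b ^ m' a b)
        = (∏ a ∈ range j, lam a j ^ m a) * Q := by
      rw [Finset.prod_congr rfl hinner,
        ← Finset.prod_range_mul_prod_Ico _ (Nat.succ_le_of_lt hj),
        Finset.prod_range_succ]
      have h2 : (∏ a ∈ Ico (j + 1) n,
          if a < j then lam a j ^ m a else if a = j then Q else 1) = 1 := by
        apply Finset.prod_eq_one
        intro a ha
        have := (mem_Ico.mp ha).1
        rw [if_neg (by omega), if_neg (by omega)]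
      rw [h2, mul_one]
      congr 1
      · exact Finset.prod_congr rfl fun a ha => if_pos (mem_range.mp ha)
      · rw [if_neg (lt_irrefl _), if_pos rfl]
    have h0 := hfree m' (hdouble.trans (hsingle.symm.trans h))
    intro s hs hsj
    rcases lt_or_gt_of_ne hsj with hlt | hgt
    · have := h0 s j hlt hj
      simpa [hm'] using this
    · have := h0 j s hgt hs
      simp [hm', hsj.symm, Ne.symm hsj] at this
      omega
  · intro h
    apply Finset.prod_eq_one
    intro s hs
    rcases eq_or_ne s j with rfl | hne
    · rw [hdiag s hj, one_zpow]
    · rw [h s (mem_range.mp hs) hne, zpow_zero]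

open Finset in
/-- With `Λ` extended multiplicatively antisymmetric from a multiplicatively
independent family `(λ_{i,j})_{i<j}`, for every relevant index `i` (0-based: `i < r` or
`2r ≤ i < r+n`), the multiplicative condition `∏_k λ̃_{k,i}^{ρ_k} = 1` is equivalent to
the linear system: `ρ_k = ρ_{k+r}` for all `k < r` with `k ≠ i`, and `ρ_k = 0` for all
`2r ≤ k < r+n` with `k ≠ i`. -/
theorem stmt_10 {k : Type*} [Field k] {n r : ℕ} (hr : r ≤ n)
    (lam : ℕ → ℕ → kˣ)
    (hanti : ∀ i j, i < n → j < n → lam i j * lam j i = 1)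
    (hdiag : ∀ i, i < n → lam i i = 1)
    (hfree : ∀ m : ℕ → ℕ → ℤ,
      (∏ i ∈ range n, ∏ j ∈ Ico (i + 1) n, lam i j ^ m i j) = 1 →
      ∀ i j, i < j → j < n → m i j = 0)
    (ρ : ℕ → ℕ) (hρsupp : ∀ i, r + n ≤ i → ρ i = 0)
    (i : ℕ) (hi : i < r ∨ (2 * r ≤ i ∧ i < r + n)) :
    (∏ t ∈ range (r + n), Qmat r lam t i ^ ρ t) = 1 ↔
      ((∀ t, t < r → t ≠ i → ρ t = ρ (t + r)) ∧
        (∀ t, 2 * r ≤ t → t < r + n → t ≠ i → ρ t = 0)) := by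
  have hsplit : (∏ t ∈ range (r + n), Qmat r lam t i ^ ρ t)
      = (∏ t ∈ range r, Qmat r lam t i ^ ρ t) *
        ∏ s ∈ range n, Qmat r lam (r + s) i ^ ρ (r + s) := by
    rw [← Finset.prod_range_mul_prod_Ico _ (Nat.le_add_right r n)]
    congr 1
    rw [Finset.prod_Ico_eq_prod_range]
    simp
  rcases hi with hi | ⟨hi1, hi2⟩
  · -- case i < r
    have hin : i < n := lt_of_lt_of_le hi hr
    have e1 : (∏ t ∈ range r, Qmat r lam t i ^ ρ t)
        = ∏ t ∈ range r, lam t i ^ ((ρ t : ℤ)) := by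
      refine Finset.prod_congr rfl fun t ht => ?_
      have ht' := mem_range.mp ht
      rw [zpow_natCast]
      simp [Qmat, ht', hi]
    have e2 : (∏ s ∈ range n, Qmat r lam (r + s) i ^ ρ (r + s))
        = ∏ s ∈ range n, lam s i ^ (-(ρ (r + s) : ℤ)) := by
      refine Finset.prod_congr rfl fun s _ => ?_
      have h1 : ¬ (r + s < r) := by omega
      have h2 : r + s - r = s := by omega
      rw [Qmat]
      simp only [h1, if_false, h2, if_pos hi]
      rw [zpow_neg, ← inv_zpow, zpow_natCast]
    rw [hsplit, e1, e2, combine' (fun s => lam s i) _ _ r n hr,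
      core' lam hanti hdiag hfree hin]
    constructor
    · intro h
      constructor
      · intro t ht hti
        have := h t (lt_of_lt_of_le ht hr) hti
        rw [if_pos ht] at this
        have : (ρ t : ℤ) = (ρ (r + t) : ℤ) := by omega
        have : ρ t = ρ (r + t) := by exact_mod_cast this
        rwa [Nat.add_comm] at this
      · intro t h2r htn hti
        have hs : t - r < n := by omega
        have hsi : t - r ≠ i := by omega
        have := h (t - r) hs hsi
        rw [if_neg (by omega)] at this
        have ht' : r + (t - r) = t := by omega
        rw [ht'] at this
        omega
    · rintro ⟨h1, h2⟩ s hs hsi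
      by_cases hsr : s < r
      · rw [if_pos hsr]
        have := h1 s hsr hsi
        rw [Nat.add_comm] at this
        omega
      · rw [if_neg hsr]
        have := h2 (r + s) (by omega) (by omega) (by omega)
        omega
  · -- case 2r ≤ i < r + n
    set j := i - r with hj
    have hij : i = r + j := by omega
    have hjn : j < n := by omega
    have hjr : r ≤ j := by omega
    have e1 : (∏ t ∈ range r, Qmat r lam t i ^ ρ t)
        = ∏ t ∈ range r, lam t j ^ (-(ρ t : ℤ)) := by
      refine Finset.prod_congr rfl fun t ht => ?_
      have ht' := mem_range.mp ht
      have h1 : ¬ (i < r) := by omega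
      rw [Qmat]
      simp only [if_pos ht', h1, if_false]
      rw [zpow_neg, ← inv_zpow, zpow_natCast]
    have e2 : (∏ s ∈ range n, Qmat r lam (r + s) i ^ ρ (r + s))
        = ∏ s ∈ range n, lam s j ^ ((ρ (r + s) : ℤ)) := by
      refine Finset.prod_congr rfl fun s _ => ?_
      have h1 : ¬ (r + s < r) := by omega
      have h2 : ¬ (i < r) := by omega
      have h3 : r + s - r = s := by omega
      rw [Qmat, zpow_natCast]
      simp only [h1, h2, if_false, h3]
      rw [← hj]
    rw [hsplit, e1, e2, combine' (fun s => lam s j) _ _ r n hr,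
      core' lam hanti hdiag hfree hjn]
    constructor
    · intro h
      constructor
      · intro t ht hti
        have := h t (lt_of_lt_of_le ht hr) (by omega)
        rw [if_pos ht] at this
        have : ρ t = ρ (r + t) := by omega
        rwa [Nat.add_comm] at this
      · intro t h2r htn hti
        have := h (t - r) (by omega) (by omega)
        rw [if_neg (by omega)] at this
        have ht' : r + (t - r) = t := by omega
        rw [ht'] at this
        omega
    · rintro ⟨h1, h2⟩ s hs hsi
      by_cases hsr : s < r
      · rw [if_pos hsr]
        have := h1 s hsr (by omega)
        rw [Nat.add_comm] at this
        omega
      · rw [if_neg hsr]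
        have := h2 (r + s) (by omega) (by omega) (by omega)
        omega
end

section
/- Let λ ∈ k* have finite order n ≥ 2 and let A be generated by x, y, z with xy - yx = 1, xz = λzx, yz = λ⁻¹zy. Then for 1 ≤ t ≤ n-1, the element z^t is not a sum of commutators: z^t ∉ [A, A], where [A,A] is the k-span of all commutators ab - ba. -/
private def wgt {k : Type*} [Field k] (c : k) : ℕ → k
  | 0 => 1
  | (a+1) => (a+1) * wgt c a * c

private lemma comm_pow {k A : Type*} [Field k] [Ring A] [Algebra k A] {g h : A} {s : k}
    (H : g * h = s • (h * g)) (m : ℕ) : g * h ^ m = s ^ m • (h ^ m * g) := by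
  induction m with
  | zero => simp
  | succ m ih =>
    rw [pow_succ, ← mul_assoc, ih, smul_mul_assoc, mul_assoc, H, mul_smul_comm, smul_smul,
      ← mul_assoc, ← pow_succ, ← pow_succ]

private lemma comm_pow' {k A : Type*} [Field k] [Ring A] [Algebra k A] {g h : A} {s : k}
    (H : g * h = s • (h * g)) (m : ℕ) : g ^ m * h = s ^ m • (h * g ^ m) := by
  induction m with
  | zero => simp
  | succ m ih =>
    rw [pow_succ, mul_assoc, H, mul_smul_comm, ← mul_assoc, ih, smul_mul_assoc, smul_smul,
      mul_assoc, ← pow_succ, ← pow_succ']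

/-- Let `λ ∈ k*` have finite multiplicative order `n ≥ 2` (char k = 0),
and let `A` be the algebra generated by `x, y, z` with relations `x*y - y*x = 1`,
`x*z = λ • (z*x)`, `y*z = λ⁻¹ • (z*y)` (with PBW basis `x^a y^b z^c`). Then for
`1 ≤ t ≤ n-1`, the element `z^t` is not a sum of commutators: `z^t ∉ [A, A]`, the
`k`-span of all commutators `ab - ba`. -/
theorem stmt_18 {k : Type*} [Field k] [CharZero k] {A : Type*} [Ring A] [Algebra k A]
    (u : kˣ) (n : ℕ) (hn : 2 ≤ n) (hord : orderOf u = n) (x y z : A)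
    (hxy : x * y - y * x = 1)
    (hxz : x * z = (u : k) • (z * x))
    (hyz : y * z = ((u⁻¹ : kˣ) : k) • (z * y))
    (bA : Module.Basis (ℕ × ℕ × ℕ) k A)
    (hbA : ∀ p : ℕ × ℕ × ℕ, bA p = x ^ p.1 * y ^ p.2.1 * z ^ p.2.2)
    (t : ℕ) (ht1 : 1 ≤ t) (ht2 : t ≤ n - 1) :
    z ^ t ∉ Submodule.span k {w : A | ∃ a b : A, w = a * b - b * a} := by
  -- scalars
  set μ : k := (u : k) with hμdef
  set ν : k := ((u⁻¹ : kˣ) : k) with hνdef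
  have hνμ : ν * μ = 1 := Units.inv_mul u
  have hμν : μ * ν = 1 := Units.mul_inv u
  -- u^t ≠ 1
  have htlt : t < n := lt_of_le_of_lt ht2 (Nat.sub_lt (by omega) one_pos)
  have hμt : μ ^ t ≠ 1 := by
    intro h
    have hu : u ^ t = 1 := by ext; push_cast; exact h
    have := orderOf_dvd_of_pow_eq_one hu
    rw [hord] at this
    have := Nat.le_of_dvd (by omega) this
    omega
  have hct : (1 : k) - μ ^ t ≠ 0 := sub_ne_zero.mpr (Ne.symm hμt)
  set W : ℕ → k := wgt (1 - μ ^ t)⁻¹ with hWdef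
  have hW0 : W 0 = 1 := rfl
  have hwrec : ∀ a : ℕ, (1 - μ ^ t) * W (a + 1) = ((a : k) + 1) * W a := by
    intro a
    have h1 : W (a + 1) = ((a : k) + 1) * W a * (1 - μ ^ t)⁻¹ := by
      rw [hWdef]
      simp [wgt]
    rw [h1]
    field_simp
  have hνμt : ν ^ t * μ ^ t = 1 := by rw [← mul_pow, hνμ, one_pow]
  -- basic commutation
  have hzx : z * x = ν • (x * z) := by rw [hxz, smul_smul, hνμ, one_smul]
  have hzy : z * y = μ • (y * z) := by rw [hyz, smul_smul, hμν, one_smul]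
  have hyx : y * x = x * y - 1 := by rw [eq_sub_iff_add_eq, ← hxy]; abel
  -- power commutation
  have L1 : ∀ a : ℕ, z * x ^ a = ν ^ a • (x ^ a * z) := comm_pow hzx
  have L2 : ∀ b : ℕ, z * y ^ b = μ ^ b • (y ^ b * z) := comm_pow hzy
  have L3 : ∀ c : ℕ, z ^ c * x = ν ^ c • (x * z ^ c) := comm_pow' hzx
  have L4 : ∀ c : ℕ, z ^ c * y = μ ^ c • (y * z ^ c) := comm_pow' hzy
  -- Weyl power commutation
  have hxx : ∀ a : ℕ, (a : k) • (x * x ^ (a - 1)) = (a : k) • x ^ a := by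
    intro a
    cases a with
    | zero => simp
    | succ m => rw [Nat.add_sub_cancel, ← pow_succ']
  have hyy : ∀ b : ℕ, (b : k) • (y ^ (b - 1) * y) = (b : k) • y ^ b := by
    intro b
    cases b with
    | zero => simp
    | succ m => rw [Nat.add_sub_cancel, ← pow_succ]
  have W2 : ∀ a : ℕ, y * x ^ a = x ^ a * y - (a : k) • x ^ (a - 1) := by
    intro a
    induction a with
    | zero => simp
    | succ a ih =>
      have h1 : y * x ^ (a + 1) = x * (y * x ^ a) - x ^ a := by
        rw [pow_succ', ← mul_assoc, hyx, sub_mul, one_mul, mul_assoc]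
      rw [h1, ih, mul_sub, ← mul_assoc, ← pow_succ', mul_smul_comm, hxx a,
        Nat.add_sub_cancel]
      push_cast
      rw [add_smul, one_smul]
      abel
  have W1 : ∀ b : ℕ, y ^ b * x = x * y ^ b - (b : k) • y ^ (b - 1) := by
    intro b
    induction b with
    | zero => simp
    | succ b ih =>
      have h1 : y ^ (b + 1) * x = (y ^ b * x) * y - y ^ b := by
        rw [pow_succ, mul_assoc, hyx, mul_sub, mul_one, mul_assoc]
      rw [h1, ih, sub_mul, smul_mul_assoc, hyy b, Nat.add_sub_cancel, mul_assoc, ← pow_succ]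
      push_cast
      rw [add_smul, one_smul]
      abel
  -- swap lemmas in right-associated form
  have S1 : ∀ (w : A) (a : ℕ), z * (x ^ a * w) = ν ^ a • (x ^ a * (z * w)) := by
    intro w a; rw [← mul_assoc, L1, smul_mul_assoc, mul_assoc]
  have S2 : ∀ (w : A) (b : ℕ), z * (y ^ b * w) = μ ^ b • (y ^ b * (z * w)) := by
    intro w b; rw [← mul_assoc, L2, smul_mul_assoc, mul_assoc]
  have S3 : ∀ (w : A) (b : ℕ),
      y ^ b * (x * w) = x * (y ^ b * w) - (b : k) • (y ^ (b - 1) * w) := by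
    intro w b; rw [← mul_assoc, W1, sub_mul, smul_mul_assoc, mul_assoc]
  have S4 : ∀ (w : A) (a : ℕ), x ^ a * (x * w) = x ^ (a + 1) * w := by
    intro w a; rw [← mul_assoc, ← pow_succ]
  have S4' : ∀ (w : A) (a : ℕ), x * (x ^ a * w) = x ^ (a + 1) * w := by
    intro w a; rw [← mul_assoc, ← pow_succ']
  have S5 : ∀ (w : A) (b : ℕ), y ^ b * (y * w) = y ^ (b + 1) * w := by
    intro w b; rw [← mul_assoc, ← pow_succ]
  have S6 : ∀ (w : A) (a : ℕ),
      y * (x ^ a * w) = x ^ a * (y * w) - (a : k) • (x ^ (a - 1) * w) := by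
    intro w a; rw [← mul_assoc, W2, sub_mul, smul_mul_assoc, mul_assoc]
  have S7 : ∀ (w : A) (b : ℕ), y * (y ^ b * w) = y ^ (b + 1) * w := by
    intro w b; rw [← mul_assoc, ← pow_succ']
  -- the trace functional
  set g : ℕ × ℕ × ℕ → k := fun p => if p.1 = p.2.1 ∧ p.2.2 = t then W p.1 else 0 with hgdef
  set φ : A →ₗ[k] k := bA.constr ℕ g with hφdef
  have hφ : ∀ a b c : ℕ,
      φ (x ^ a * (y ^ b * z ^ c)) = if a = b ∧ c = t then W a else 0 := by
    intro a b c
    have h1 : x ^ a * (y ^ b * z ^ c) = bA (a, b, c) := by rw [hbA, mul_assoc]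
    rw [h1, hφdef, Module.Basis.constr_basis, hgdef]
  -- x-commutators vanish
  have hXc : ∀ v : A, φ (x * v - v * x) = 0 := by
    have h0 : φ.comp (LinearMap.mulLeft k x - LinearMap.mulRight k x) = 0 := by
      refine bA.ext fun p => ?_
      obtain ⟨a, b, c⟩ := p
      rw [hbA]
      simp only [LinearMap.comp_apply, LinearMap.sub_apply, LinearMap.mulLeft_apply,
        LinearMap.mulRight_apply, LinearMap.zero_apply, mul_assoc]
      rw [S4', L3, mul_smul_comm, mul_smul_comm, S3, mul_sub, mul_smul_comm, S4,
        smul_sub, smul_smul]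
      simp only [map_sub, map_smul, hφ, smul_eq_mul]
      by_cases hc : c = t
      · subst hc
        by_cases hb : b = a + 1
        · subst hb
          rw [Nat.add_sub_cancel]
          simp only [and_true, if_pos rfl]
          push_cast
          linear_combination (-(ν ^ c)) * hwrec a - W (a + 1) * hνμt
        · have h2 : ¬(a + 1 = b) := fun h => hb h.symm
          cases b with
          | zero => simp [h2]
          | succ b' =>
            have h3 : ¬(a = b') := by omega
            simp [h2, h3]
      · simp [hc]
    intro v
    have := LinearMap.congr_fun h0 v
    simpa using this
  -- y-commutators vanish
  have hYc : ∀ v : A, φ (y * v - v * y) = 0 := by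
    have h0 : φ.comp (LinearMap.mulLeft k y - LinearMap.mulRight k y) = 0 := by
      refine bA.ext fun p => ?_
      obtain ⟨a, b, c⟩ := p
      rw [hbA]
      simp only [LinearMap.comp_apply, LinearMap.sub_apply, LinearMap.mulLeft_apply,
        LinearMap.mulRight_apply, LinearMap.zero_apply, mul_assoc]
      rw [S6, S7, L4, mul_smul_comm, mul_smul_comm, S5]
      simp only [map_sub, map_smul, hφ, smul_eq_mul]
      by_cases hc : c = t
      · subst hc
        by_cases ha : a = b + 1
        · subst ha
          rw [Nat.add_sub_cancel]
          simp only [and_true, if_pos rfl]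
          push_cast
          linear_combination hwrec b
        · have h2 : ¬(a = b + 1) := ha
          cases a with
          | zero => simp [h2]
          | succ a' =>
            have h3 : ¬(a' = b) := by omega
            simp [h2, h3]
      · simp [hc]
    intro v
    have := LinearMap.congr_fun h0 v
    simpa using this
  -- z-commutators vanish
  have hZc : ∀ v : A, φ (z * v - v * z) = 0 := by
    have h0 : φ.comp (LinearMap.mulLeft k z - LinearMap.mulRight k z) = 0 := by
      refine bA.ext fun p => ?_
      obtain ⟨a, b, c⟩ := p
      rw [hbA]
      simp only [LinearMap.comp_apply, LinearMap.sub_apply, LinearMap.mulLeft_apply,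
        LinearMap.mulRight_apply, LinearMap.zero_apply, mul_assoc]
      rw [S1, S2, ← pow_succ', ← pow_succ, mul_smul_comm, smul_smul]
      simp only [map_sub, map_smul, hφ, smul_eq_mul]
      by_cases h : a = b ∧ c + 1 = t
      · obtain ⟨h1, h2⟩ := h
        subst h1
        have h3 : ν ^ a * μ ^ a = 1 := by rw [← mul_pow, hνμ, one_pow]
        simp [h2, h3]
      · simp [h]
    intro v
    have := LinearMap.congr_fun h0 v
    simpa using this
  -- closure of the trace property under products
  have Pmul : ∀ p q : A, (∀ r, φ (p * r - r * p) = 0) → (∀ r, φ (q * r - r * q) = 0) →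
      ∀ r, φ (p * q * r - r * (p * q)) = 0 := by
    intro p q hp hq r
    have h1 : p * q * r - r * (p * q)
        = (p * (q * r) - (q * r) * p) + (q * (r * p) - (r * p) * q) := by noncomm_ring
    rw [h1, map_add, hp, hq, add_zero]
  have Ppow : ∀ (m : A), (∀ r, φ (m * r - r * m) = 0) → ∀ (i : ℕ) (r : A),
      φ (m ^ i * r - r * m ^ i) = 0 := by
    intro m hm i
    induction i with
    | zero => intro r; simp
    | succ i ih =>
      intro r
      have := Pmul (m ^ i) m ih hm r
      rwa [← pow_succ] at this
  have Pmono : ∀ (p : ℕ × ℕ × ℕ) (r : A), φ (bA p * r - r * bA p) = 0 := by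
    intro p r
    obtain ⟨a, b, c⟩ := p
    rw [hbA]
    exact Pmul _ _ (Pmul _ _ (Ppow x hXc a) (Ppow y hYc b)) (Ppow z hZc c) r
  -- all commutators are in the kernel of φ
  have hker : {w : A | ∃ a b : A, w = a * b - b * a} ⊆ (LinearMap.ker φ : Submodule k A) := by
    rintro w ⟨p, q, rfl⟩
    have h0 : φ.comp (LinearMap.mulRight k q - LinearMap.mulLeft k q) = 0 := by
      refine bA.ext fun i => ?_
      simpa using Pmono i q
    have h1 := LinearMap.congr_fun h0 p
    simp only [LinearMap.comp_apply, LinearMap.sub_apply, LinearMap.mulLeft_apply,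
      LinearMap.mulRight_apply, LinearMap.zero_apply] at h1
    exact LinearMap.mem_ker.mpr h1
  -- conclusion
  intro hmem
  have h1 : z ^ t ∈ LinearMap.ker φ := Submodule.span_le.mpr hker hmem
  have h2 : φ (z ^ t) = 0 := LinearMap.mem_ker.mp h1
  have h3 : φ (z ^ t) = 1 := by
    have := hφ 0 0 t
    simpa [hW0] using this
  rw [h3] at h2
  exact one_ne_zero h2
end

section
/- Let λ ∈ k* be a non-root of unity and A generated by x, y, z with xy - yx = 1, xz = λzx, yz = λ⁻¹zy. Then A/[A,A] is spanned as a k-vector space by the classes of 1 and z^s for s ≥ 1; moreover the class of 1 is zero (1 = [x,y] ∈ [A,A]), so A/[A,A] ≅ ⊕_{s≥1} k·z̄^s. -/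
section Aux
variable {k : Type*} [Field k] {A : Type*} [Ring A] [Algebra k A]

lemma aux_smul_mem {k : Type*} [Field k] {A : Type*} [AddCommGroup A] [Module k A]
    (M : Submodule k A) (c : k) (hc : c ≠ 0) (v w : A) (h : c • v = w) (hw : w ∈ M) :
    v ∈ M := by
  have h2 := M.smul_mem c⁻¹ hw
  rwa [← h, smul_smul, inv_mul_cancel₀ hc, one_smul] at h2

lemma aux_yxpow (x y : A) (hxy : x * y - y * x = 1) :
    ∀ n : ℕ, y * x ^ n = x ^ n * y - (n : k) • x ^ (n - 1) := by
  have hyx : y * x = x * y - 1 := by rw [eq_sub_iff_add_eq, ← hxy]; abel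
  have key : ∀ n : ℕ, y * x ^ (n + 1) = x ^ (n + 1) * y - ((n : k) + 1) • x ^ n := by
    intro n
    induction n with
    | zero => simpa using hyx
    | succ n ih =>
      have h1 : x ^ (n+1) * (x * y) = x ^ (n+1+1) * y := by rw [← mul_assoc, ← pow_succ]
      rw [pow_succ, ← mul_assoc, ih, sub_mul, smul_mul_assoc, mul_assoc (x^(n+1)) y x, hyx,
        mul_sub, mul_one, h1, ← pow_succ]
      rw [mul_assoc (x^(n+1)) x y, h1]
      module
  intro n
  cases n with
  | zero => simp
  | succ n => simpa using key n

lemma aux_xypow (x y : A) (hxy : x * y - y * x = 1) :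
    ∀ n : ℕ, x * y ^ n = y ^ n * x + (n : k) • y ^ (n - 1) := by
  have hxy' : x * y = y * x + 1 := by rw [← hxy]; abel
  have key : ∀ n : ℕ, x * y ^ (n + 1) = y ^ (n + 1) * x + ((n : k) + 1) • y ^ n := by
    intro n
    induction n with
    | zero => simpa using hxy'
    | succ n ih =>
      have h1 : y ^ (n+1) * (y * x) = y ^ (n+1+1) * x := by rw [← mul_assoc, ← pow_succ]
      rw [pow_succ, ← mul_assoc, ih, add_mul, smul_mul_assoc, mul_assoc (y^(n+1)) x y, hxy',
        mul_add, mul_one, mul_assoc (y^(n+1)) y x, h1, ← pow_succ]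
      module
  intro n
  cases n with
  | zero => simp
  | succ n => simpa using key n

lemma aux_zpow (z w : A) (l : k) (hzw : z * w = l • (w * z)) :
    ∀ n : ℕ, z * w ^ n = l ^ n • (w ^ n * z) := by
  intro n
  induction n with
  | zero => simp
  | succ n ih =>
    rw [pow_succ', ← mul_assoc, hzw, smul_mul_assoc, mul_assoc, ih, mul_smul_comm, smul_smul,
      ← mul_assoc, ← pow_succ', ← pow_succ']

lemma aux_zcx (x z : A) (l : k) (hl : l ≠ 0) (hxz : x * z = l • (z * x)) :
    ∀ n : ℕ, z ^ n * x = (l⁻¹) ^ n • (x * z ^ n) := by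
  intro n
  rw [aux_zpow x z l hxz n, smul_smul, ← mul_pow, inv_mul_cancel₀ hl, one_pow, one_smul]

lemma aux_Cx (x y z : A) (l : k) (hl : l ≠ 0) (hxy : x * y - y * x = 1)
    (hxz : x * z = l • (z * x)) (a b c : ℕ) :
    x * (x ^ a * y ^ b * z ^ c) - (x ^ a * y ^ b * z ^ c) * x
      = (1 - (l⁻¹) ^ c) • (x ^ (a+1) * y ^ b * z ^ c)
        + ((b : k) * (l⁻¹) ^ c) • (x ^ a * y ^ (b-1) * z ^ c) := by
  have hbx : y ^ b * x = x * y ^ b - (b : k) • y ^ (b-1) := by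
    rw [aux_xypow (k := k) x y hxy b]; abel
  have e1 : x * (x ^ a * y ^ b * z ^ c) = x ^ (a+1) * y ^ b * z ^ c := by
    rw [← mul_assoc, ← mul_assoc, ← pow_succ']
  have e2 : (x ^ a * y ^ b * z ^ c) * x
      = (l⁻¹) ^ c • (x ^ (a+1) * y ^ b * z ^ c) - ((b:k) * (l⁻¹) ^ c) • (x ^ a * y ^ (b-1) * z ^ c) := by
    rw [mul_assoc, aux_zcx x z l hl hxz c, mul_smul_comm]
    rw [show x ^ a * y ^ b * (x * z ^ c) = x ^ a * (y ^ b * x) * z ^ c by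
      rw [← mul_assoc, mul_assoc (x^a) (y^b) x]]
    rw [hbx, mul_sub, sub_mul, mul_smul_comm, smul_mul_assoc, smul_sub, smul_smul,
      ← mul_assoc, ← pow_succ]
    module
  rw [e1, e2]
  module

lemma aux_Cy (x y z : A) (l : k) (hl : l ≠ 0) (hxy : x * y - y * x = 1)
    (hyz : y * z = l⁻¹ • (z * y)) (a b c : ℕ) :
    y * (x ^ a * y ^ b * z ^ c) - (x ^ a * y ^ b * z ^ c) * y
      = (1 - l ^ c) • (x ^ a * y ^ (b+1) * z ^ c)
        - ((a : k)) • (x ^ (a-1) * y ^ b * z ^ c) := by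
  have e1 : y * (x ^ a * y ^ b * z ^ c)
      = x ^ a * y ^ (b+1) * z ^ c - (a : k) • (x ^ (a-1) * y ^ b * z ^ c) := by
    rw [← mul_assoc, ← mul_assoc, aux_yxpow (k := k) x y hxy a, sub_mul, sub_mul,
      smul_mul_assoc, smul_mul_assoc, mul_assoc (x^a) y (y^b), ← pow_succ']
  have e2 : (x ^ a * y ^ b * z ^ c) * y = l ^ c • (x ^ a * y ^ (b+1) * z ^ c) := by
    rw [mul_assoc, aux_zcx y z l⁻¹ (inv_ne_zero hl) hyz c, inv_inv, mul_smul_comm,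
      ← mul_assoc, mul_assoc (x^a) (y^b) y, ← pow_succ]
  rw [e1, e2]
  module

lemma aux_Cz (x y z : A) (l : k) (hl : l ≠ 0)
    (hxz : x * z = l • (z * x)) (hyz : y * z = l⁻¹ • (z * y)) (a b c : ℕ) :
    z * (x ^ a * y ^ b * z ^ c) - (x ^ a * y ^ b * z ^ c) * z
      = ((l⁻¹) ^ a * l ^ b - 1) • (x ^ a * y ^ b * z ^ (c+1)) := by
  have hzx : z * x = l⁻¹ • (x * z) := by
    rw [hxz, smul_smul, inv_mul_cancel₀ hl, one_smul]
  have hzy : z * y = l • (y * z) := by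
    rw [hyz, smul_smul, mul_inv_cancel₀ hl, one_smul]
  have e1 : z * (x ^ a * y ^ b * z ^ c)
      = ((l⁻¹) ^ a * l ^ b) • (x ^ a * y ^ b * z ^ (c+1)) := by
    rw [← mul_assoc, ← mul_assoc, aux_zpow z x l⁻¹ hzx a, smul_mul_assoc, smul_mul_assoc,
      mul_assoc (x^a) z (y^b), aux_zpow z y l hzy b, mul_smul_comm, smul_mul_assoc, smul_smul,
      ← mul_assoc (x^a) (y^b) z, mul_assoc (x^a*y^b) z (z^c), ← pow_succ' z c]
  have e2 : (x ^ a * y ^ b * z ^ c) * z = x ^ a * y ^ b * z ^ (c+1) := by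
    rw [mul_assoc, ← pow_succ]
  rw [e1, e2]
  module

end Aux

/-- Let `λ ∈ k*` not be a root of unity (char k = 0), and `A` the algebra
generated by `x, y, z` with relations `x*y - y*x = 1`, `x*z = λ • (z*x)`,
`y*z = λ⁻¹ • (z*y)` (with PBW basis `x^a y^b z^c`). Let `[A,A]` be the `k`-span of all
commutators. Then `1 ∈ [A,A]` (indeed `1 = [x,y]`), every element of `A` is, modulo
`[A,A]`, a `k`-linear combination of the `z^s` with `s ≥ 1`, and the classes of the
`z^s` (`s ≥ 1`) in `A/[A,A]` are linearly independent; hence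
`A/[A,A] ≅ ⊕_{s ≥ 1} k·z̄^s`. -/
theorem stmt_19 {k : Type*} [Field k] [CharZero k] {A : Type*} [Ring A] [Algebra k A]
    (u : kˣ) (hu : ∀ m : ℕ, 0 < m → u ^ m ≠ 1) (x y z : A)
    (hxy : x * y - y * x = 1)
    (hxz : x * z = (u : k) • (z * x))
    (hyz : y * z = ((u⁻¹ : kˣ) : k) • (z * y))
    (bA : Module.Basis (ℕ × ℕ × ℕ) k A)
    (hbA : ∀ p : ℕ × ℕ × ℕ, bA p = x ^ p.1 * y ^ p.2.1 * z ^ p.2.2) :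
    (1 : A) ∈ Submodule.span k {w : A | ∃ a b : A, w = a * b - b * a} ∧
    (∀ w : A, ∃ p ∈ Submodule.span k (Set.range fun s : ℕ => z ^ (s + 1)),
      w - p ∈ Submodule.span k {w : A | ∃ a b : A, w = a * b - b * a}) ∧
    LinearIndependent k fun s : ℕ =>
      Submodule.Quotient.mk
        (p := Submodule.span k {w : A | ∃ a b : A, w = a * b - b * a})
        (z ^ (s + 1)) := by
  classical
  set l : k := (u : k) with hldef
  have hl : l ≠ 0 := u.ne_zero
  have hyz' : y * z = l⁻¹ • (z * y) := by rwa [Units.val_inv_eq_inv_val] at hyz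
  have hlp : ∀ m : ℕ, 0 < m → l ^ m ≠ 1 := by
    intro m hm h
    exact hu m hm (Units.ext (by rw [Units.val_pow_eq_pow_val, Units.val_one]; exact h))
  have hpow_inj : ∀ a b : ℕ, l ^ a = l ^ b → a = b := by
    have key : ∀ a b : ℕ, a ≤ b → l ^ a = l ^ b → a = b := by
      intro a b hab h
      by_contra hne
      have h2 : l ^ a * 1 = l ^ a * l ^ (b - a) := by
        rw [mul_one, ← pow_add]
        rw [h]; congr 1; omega
      have h3 : (1 : k) = l ^ (b - a) := mul_left_cancel₀ (pow_ne_zero a hl) h2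
      exact hlp (b - a) (by omega) h3.symm
    intro a b h
    rcases le_total a b with hab | hab
    · exact key a b hab h
    · exact (key b a hab h.symm).symm
  set C : Submodule k A := Submodule.span k {w : A | ∃ a b : A, w = a * b - b * a} with hC
  set Z : Submodule k A := Submodule.span k (Set.range fun s : ℕ => z ^ (s + 1)) with hZ
  have hcomm : ∀ a b : A, a * b - b * a ∈ C := fun a b =>
    Submodule.subset_span ⟨a, b, rfl⟩
  -- monomials with c = 0 lie in C
  have hmon0 : ∀ a b : ℕ, x ^ a * y ^ b * z ^ 0 ∈ C := by
    intro a b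
    have h := aux_Cy x y z l hl hxy hyz' (a+1) b 0
    rw [show (1:k) - l ^ 0 = 0 by simp, zero_smul, zero_sub, Nat.add_sub_cancel] at h
    have hne : (-(((a+1:ℕ)):k)) ≠ 0 := by
      simp only [neg_ne_zero, Nat.cast_ne_zero]
      omega
    refine aux_smul_mem C (-(((a+1:ℕ)):k)) hne _ _ ?_ (hcomm y (x ^ (a+1) * y ^ b * z ^ 0))
    rw [h, neg_smul]
  -- all monomials lie in Z ⊔ C
  have hmonZC : ∀ a b c : ℕ, x ^ a * y ^ b * z ^ c ∈ Z ⊔ C := by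
    intro a b c
    match c with
    | 0 => exact Submodule.mem_sup_right (hmon0 a b)
    | Nat.succ c =>
      by_cases hab : a = b
      · subst hab
        induction a with
        | zero =>
          apply Submodule.mem_sup_left
          have : x ^ 0 * y ^ 0 * z ^ (c+1) = z ^ (c+1) := by simp
          rw [this]
          exact Submodule.subset_span ⟨c, rfl⟩
        | succ a ih =>
          have h := aux_Cx x y z l hl hxy hxz a (a+1) (c+1)
          simp only [Nat.add_sub_cancel] at h
          have hcoef : (1 : k) - (l⁻¹) ^ (c+1) ≠ 0 := by
            rw [sub_ne_zero, inv_pow]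
            intro h1
            exact hlp (c+1) (Nat.succ_pos c) (inv_eq_one.mp h1.symm)
          have hX : ((1 : k) - (l⁻¹) ^ (c+1)) • (x ^ (a+1) * y ^ (a+1) * z ^ (c+1))
              = (x * (x ^ a * y ^ (a+1) * z ^ (c+1)) - (x ^ a * y ^ (a+1) * z ^ (c+1)) * x)
                - (((a+1 : ℕ) : k) * (l⁻¹) ^ (c+1)) • (x ^ a * y ^ a * z ^ (c+1)) := by
            rw [h]; abel
          have hmem : ((1 : k) - (l⁻¹) ^ (c+1)) • (x ^ (a+1) * y ^ (a+1) * z ^ (c+1)) ∈ Z ⊔ C := by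
            rw [hX]
            exact Submodule.sub_mem _ (Submodule.mem_sup_right (hcomm x _))
              (Submodule.smul_mem _ _ ih)
          have := Submodule.smul_mem (Z ⊔ C) ((1 - (l⁻¹) ^ (c+1))⁻¹) hmem
          rwa [smul_smul, inv_mul_cancel₀ hcoef, one_smul] at this
      · -- a ≠ b : use the z-commutator
        have h := aux_Cz x y z l hl hxz hyz' a b c
        have hcoef : (l⁻¹) ^ a * l ^ b - 1 ≠ 0 := by
          rw [sub_ne_zero]
          intro h1
          apply hab
          apply hpow_inj
          rw [inv_pow] at h1
          exact ((inv_mul_eq_one₀ (pow_ne_zero a hl)).mp h1)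
        apply Submodule.mem_sup_right
        have hmem : ((l⁻¹) ^ a * l ^ b - 1) • (x ^ a * y ^ b * z ^ (c+1)) ∈ C := by
          rw [← h]; exact hcomm z _
        have := Submodule.smul_mem C ((l⁻¹) ^ a * l ^ b - 1)⁻¹ hmem
        rwa [smul_smul, inv_mul_cancel₀ hcoef, one_smul] at this
  have htop : ∀ w : A, w ∈ Z ⊔ C := by
    intro w
    have hspan : Submodule.span k (Set.range bA) = ⊤ := bA.span_eq
    have hle : Submodule.span k (Set.range bA) ≤ Z ⊔ C := by
      rw [Submodule.span_le]
      rintro _ ⟨p, rfl⟩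
      rw [hbA]
      exact hmonZC p.1 p.2.1 p.2.2
    exact hle (hspan ▸ Submodule.mem_top)
  refine ⟨Submodule.subset_span ⟨x, y, hxy.symm⟩, ?_, ?_⟩
  · intro w
    obtain ⟨p, hp, q, hq, hpq⟩ := Submodule.mem_sup.mp (htop w)
    exact ⟨p, hp, by rw [← hpq, add_sub_cancel_left]; exact hq⟩
  · -- linear independence
    -- the span of commutators is contained in the span of commutators with generators
    set Lset : Set A := {w : A | ∃ m, w = x * m - m * x} ∪ {w : A | ∃ m, w = y * m - m * y}
        ∪ {w : A | ∃ m, w = z * m - m * z} with hLset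
    set L : Submodule k A := Submodule.span k Lset with hLdef
    have hCL : C ≤ L := by
      let S : Submodule k A :=
        { carrier := {a : A | ∀ b : A, a * b - b * a ∈ L}
          zero_mem' := by intro b; simp only [zero_mul, mul_zero, sub_zero]; exact zero_mem L
          add_mem' := by
            intro a₁ a₂ h₁ h₂ b
            have e : (a₁ + a₂) * b - b * (a₁ + a₂) = (a₁ * b - b * a₁) + (a₂ * b - b * a₂) := by
              noncomm_ring
            rw [e]; exact add_mem (h₁ b) (h₂ b)
          smul_mem' := by
            intro r a h b
            have e : (r • a) * b - b * (r • a) = r • (a * b - b * a) := by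
              rw [smul_mul_assoc, mul_smul_comm, smul_sub]
            rw [e]; exact Submodule.smul_mem _ _ (h b) }
      have hmulS : ∀ a₁ a₂ : A, a₁ ∈ S → a₂ ∈ S → a₁ * a₂ ∈ S := by
        intro a₁ a₂ h₁ h₂ b
        have e : (a₁ * a₂) * b - b * (a₁ * a₂)
            = (a₁ * (a₂ * b) - (a₂ * b) * a₁) + (a₂ * (b * a₁) - (b * a₁) * a₂) := by
          noncomm_ring
        rw [e]; exact add_mem (h₁ (a₂ * b)) (h₂ (b * a₁))
      have h1S : (1 : A) ∈ S := by
        intro b; simp only [one_mul, mul_one, sub_self]; exact zero_mem L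
      have hxS : x ∈ S := fun b => Submodule.subset_span (Or.inl (Or.inl ⟨b, rfl⟩))
      have hyS : y ∈ S := fun b => Submodule.subset_span (Or.inl (Or.inr ⟨b, rfl⟩))
      have hzS : z ∈ S := fun b => Submodule.subset_span (Or.inr ⟨b, rfl⟩)
      have hpowS : ∀ w : A, w ∈ S → ∀ n : ℕ, w ^ n ∈ S := by
        intro w hw n
        induction n with
        | zero => simpa [pow_zero] using h1S
        | succ n ih => rw [pow_succ]; exact hmulS _ _ ih hw
      have hStop : ∀ a : A, a ∈ S := by
        intro a
        have hspan : Submodule.span k (Set.range bA) = ⊤ := bA.span_eq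
        have hle : Submodule.span k (Set.range bA) ≤ S := by
          rw [Submodule.span_le]
          rintro _ ⟨p, rfl⟩
          rw [hbA]
          exact hmulS _ _ (hmulS _ _ (hpowS x hxS p.1) (hpowS y hyS p.2.1)) (hpowS z hzS p.2.2)
        exact hle (hspan ▸ Submodule.mem_top)
      rw [hC, Submodule.span_le]
      rintro _ ⟨a, b, rfl⟩
      exact hStop a b
    -- construction of trace functionals
    have main : ∀ g : ℕ, 0 < g → ∃ Φ : A →ₗ[k] k,
        (∀ v ∈ C, Φ v = 0) ∧ ∀ s : ℕ, Φ (z ^ (s+1)) = if s + 1 = g then 1 else 0 := by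
      intro g hg
      have hνne : (1 : k) - l ^ g ≠ 0 := sub_ne_zero.mpr (Ne.symm (hlp g hg))
      set t : ℕ → k := fun n => (n.factorial : k) * ((1 - l ^ g)⁻¹) ^ n with ht
      set wf : ℕ × ℕ × ℕ → k :=
        fun p => if p.1 = p.2.1 ∧ p.2.2 = g then t p.1 else 0 with hwf
      set Φ : A →ₗ[k] k := bA.constr k wf with hΦ
      have hΦb : ∀ p : ℕ × ℕ × ℕ, Φ (bA p) = wf p := fun p => bA.constr_basis k wf p
      have hrec : ∀ n : ℕ, t (n + 1) = (((n : k) + 1) * (1 - l ^ g)⁻¹) * t n := by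
        intro n
        simp only [ht, Nat.factorial_succ, pow_succ]
        push_cast
        ring
      -- vanishing on commutators with x
      have hΦx : ∀ m : A, Φ (x * m - m * x) = 0 := by
        have hψ : Φ.comp (LinearMap.mulLeft k x - LinearMap.mulRight k x) = 0 := by
          apply bA.ext
          intro p
          obtain ⟨a, b, c⟩ := p
          simp only [LinearMap.comp_apply, LinearMap.sub_apply, LinearMap.mulLeft_apply,
            LinearMap.mulRight_apply, LinearMap.zero_apply, map_sub]
          rw [← map_sub, hbA]
          rw [aux_Cx x y z l hl hxy hxz a b c]
          rw [← hbA ⟨a+1, b, c⟩, ← hbA ⟨a, b-1, c⟩]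
          rw [map_add, map_smul, map_smul, hΦb, hΦb, smul_eq_mul, smul_eq_mul]
          simp only [hwf]
          have hlg : l ^ g ≠ 0 := pow_ne_zero _ hl
          split_ifs with h1 h2 h2
          · -- a+1 = b, c = g : the main cancellation
            obtain ⟨hb, hc⟩ := h1
            subst hc
            rw [← hb, hrec a]
            push_cast
            field_simp
            linear_combination (-((a : k) * t a + t a)) * mul_inv_cancel₀ hlg
          · exact absurd ⟨by omega, h1.2⟩ h2
          · -- second if true, first false : forces b = 0
            obtain ⟨hb, hc⟩ := h2
            have hb0 : b = 0 := by omega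
            subst hb0
            push_cast
            ring
          · ring
        intro m
        have := congrArg (fun f => f m) hψ
        simpa using this
      have hΦy : ∀ m : A, Φ (y * m - m * y) = 0 := by
        have hψ : Φ.comp (LinearMap.mulLeft k y - LinearMap.mulRight k y) = 0 := by
          apply bA.ext
          intro p
          obtain ⟨a, b, c⟩ := p
          simp only [LinearMap.comp_apply, LinearMap.sub_apply, LinearMap.mulLeft_apply,
            LinearMap.mulRight_apply, LinearMap.zero_apply, map_sub]
          rw [← map_sub, hbA]
          rw [aux_Cy x y z l hl hxy hyz' a b c]
          rw [← hbA ⟨a, b+1, c⟩, ← hbA ⟨a-1, b, c⟩]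
          rw [map_sub, map_smul, map_smul, hΦb, hΦb, smul_eq_mul, smul_eq_mul]
          simp only [hwf]
          have hlg : l ^ g ≠ 0 := pow_ne_zero _ hl
          split_ifs with h1 h2 h2
          · -- a = b+1, c = g
            obtain ⟨ha, hc⟩ := h1
            subst hc
            rw [ha, Nat.add_sub_cancel, hrec b]
            push_cast
            field_simp
            ring
          · exact absurd ⟨by omega, h1.2⟩ h2
          · -- second if true, first false : forces a = 0
            obtain ⟨ha, hc⟩ := h2
            have ha0 : a = 0 := by omega
            subst ha0
            push_cast
            ring
          · ring
        intro m
        have := congrArg (fun f => f m) hψ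
        simpa using this
      have hΦz : ∀ m : A, Φ (z * m - m * z) = 0 := by
        have hψ : Φ.comp (LinearMap.mulLeft k z - LinearMap.mulRight k z) = 0 := by
          apply bA.ext
          intro p
          obtain ⟨a, b, c⟩ := p
          simp only [LinearMap.comp_apply, LinearMap.sub_apply, LinearMap.mulLeft_apply,
            LinearMap.mulRight_apply, LinearMap.zero_apply, map_sub]
          rw [← map_sub, hbA]
          rw [aux_Cz x y z l hl hxz hyz' a b c]
          rw [← hbA ⟨a, b, c+1⟩]
          rw [map_smul, hΦb, smul_eq_mul]
          simp only [hwf]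
          split_ifs with h1
          · obtain ⟨hab, hc⟩ := h1
            subst hab
            rw [inv_pow, inv_mul_cancel₀ (pow_ne_zero a hl), sub_self, zero_mul]
          · ring
        intro m
        have := congrArg (fun f => f m) hψ
        simpa using this
      refine ⟨Φ, ?_, ?_⟩
      · intro v hv
        have hLker : L ≤ LinearMap.ker Φ := by
          rw [hLdef, Submodule.span_le]
          intro w hw
          rcases hw with (hw | hw) | hw
          · obtain ⟨m, rfl⟩ := hw; exact hΦx m
          · obtain ⟨m, rfl⟩ := hw; exact hΦy m
          · obtain ⟨m, rfl⟩ := hw; exact hΦz m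
        exact hLker (hCL hv)
      · intro s
        have hz1 : (z : A) ^ (s+1) = bA ⟨0, 0, s+1⟩ := by
          rw [hbA]; simp
        rw [hz1, hΦb]
        simp only [hwf]
        have ht0 : t 0 = 1 := by simp [ht]
        by_cases hs : s + 1 = g
        · simp [hs, ht0]
        · simp [hs]
    rw [linearIndependent_iff]
    intro f hf
    have hmk : Submodule.Quotient.mk (p := C)
        (Finsupp.linearCombination k (fun s : ℕ => z ^ (s+1)) f) = 0 := by
      rw [show (Submodule.Quotient.mk (p := C)) = ⇑(C.mkQ) from rfl]
      rw [Finsupp.apply_linearCombination]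
      exact hf
    have hWC : Finsupp.linearCombination k (fun s : ℕ => z ^ (s+1)) f ∈ C :=
      (Submodule.Quotient.mk_eq_zero C).mp hmk
    ext s
    obtain ⟨Φ, hΦC, hΦz⟩ := main (s+1) (Nat.succ_pos s)
    have h0 : Φ (Finsupp.linearCombination k (fun s : ℕ => z ^ (s+1)) f) = 0 := hΦC _ hWC
    rw [Finsupp.apply_linearCombination, Finsupp.linearCombination_apply, Finsupp.sum] at h0
    simp only [Function.comp_apply, hΦz, smul_eq_mul, mul_ite, mul_one, mul_zero,
      add_left_inj] at h0
    rw [Finset.sum_ite_eq' f.support s (fun i => f i)] at h0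
    by_cases hs : s ∈ f.support
    · rw [if_pos hs] at h0; exact h0
    · exact Finsupp.notMem_support_iff.mp hs
end
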